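/- Let V = {X1, …, Xn} be a finite set of n ≥ 1 elements and let a1, …, an, A be nonnegative real numbers such that a1 + ⋯ + an ≥ A and ai ≤ A for all i = 1, …, n. Then there exists a normal polymatroid h : 2^V → ℝ such that h({Xi}) = ai for all i = 1, …, n and h(V) = A. -/

import Mathlib

/-- A set function `h : 2^V → ℝ` on a finite set `V` is a *normal polymatroid* if
`h(∅) = 0` and for every `U ⊆ V`, `Σ_{W ⊆ U} (−1)^{|W|+1} h(W) ≥ 0`. -/
def IsNormalPolymatroid {V : Type*} [DecidableEq V] (h : Finset V → ℝ) : Prop :=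
  h ∅ = 0 ∧ ∀ U : Finset V, 0 ≤ ∑ W ∈ U.powerset, (-1 : ℝ) ^ (W.card + 1) * h W

open MeasureTheory Set

/-- Inclusion–exclusion identity for indicator values. -/
lemma ie_aux {ι : Type*} [DecidableEq ι] (U : Finset ι) (hU : U.Nonempty)
    (q : ι → Prop) [DecidablePred q] :
    ∑ W ∈ U.powerset, (-1:ℝ)^(W.card+1) * (if ∃ i ∈ W, q i then 1 else 0)
      = if ∀ i ∈ U, q i then 1 else 0 := by
  classical
  set N : Finset ι := U.filter (fun i => ¬ q i) with hN
  have key : ∀ W ∈ U.powerset,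
      (-1:ℝ)^(W.card+1) * (if ∃ i ∈ W, q i then 1 else 0)
      = (-1:ℝ)^(W.card+1) - (-1:ℝ)^(W.card+1) * (if W ⊆ N then 1 else 0) := by
    intro W hW
    by_cases hex : ∃ i ∈ W, q i
    · have h1 : ¬ W ⊆ N := by
        obtain ⟨i, hiW, hqi⟩ := hex
        intro hsub
        exact (Finset.mem_filter.1 (hsub hiW)).2 hqi
      simp [hex, h1]
    · have h1 : W ⊆ N := by
        intro i hi
        exact Finset.mem_filter.2 ⟨Finset.mem_powerset.1 hW hi, fun h => hex ⟨i, hi, h⟩⟩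
      simp [hex, h1]
  rw [Finset.sum_congr rfl key, Finset.sum_sub_distrib]
  have e1 : ∑ W ∈ U.powerset, (-1:ℝ)^(W.card+1) = 0 := by
    have := Finset.sum_powerset_neg_one_pow_card_of_nonempty hU
    have h2 : ∑ W ∈ U.powerset, (-1:ℝ)^(W.card) = 0 := by
      exact_mod_cast congrArg (Int.cast : ℤ → ℝ) this
    calc ∑ W ∈ U.powerset, (-1:ℝ)^(W.card+1)
        = -∑ W ∈ U.powerset, (-1:ℝ)^(W.card) := by
          rw [← Finset.sum_neg_distrib]
          exact Finset.sum_congr rfl fun W _ => by ring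
      _ = 0 := by rw [h2, neg_zero]
  have hNU : N ⊆ U := Finset.filter_subset _ _
  have e2 : ∑ W ∈ U.powerset, (-1:ℝ)^(W.card+1) * (if W ⊆ N then 1 else 0)
      = ∑ W ∈ N.powerset, (-1:ℝ)^(W.card+1) := by
    rw [← Finset.sum_subset (Finset.powerset_mono.2 hNU)]
    · exact Finset.sum_congr rfl fun W hW => by
        simp [Finset.mem_powerset.1 hW]
    · intro W hW hWN
      have : ¬ W ⊆ N := fun h => hWN (Finset.mem_powerset.2 h)
      simp [this]
  rw [e1, e2, zero_sub]
  have e3 : ∑ W ∈ N.powerset, (-1:ℝ)^(W.card+1)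
      = -∑ W ∈ N.powerset, (-1:ℝ)^(W.card) := by
    rw [← Finset.sum_neg_distrib]
    exact Finset.sum_congr rfl fun W _ => by ring
  have e4 : ∑ W ∈ N.powerset, (-1:ℝ)^(W.card)
      = if N = ∅ then 1 else 0 := by
    have := (Finset.sum_powerset_neg_one_pow_card (x := N))
    exact_mod_cast congrArg (Int.cast : ℤ → ℝ) this
  rw [e3, e4, neg_neg]
  have : N = ∅ ↔ ∀ i ∈ U, q i := by
    rw [hN, Finset.filter_eq_empty_iff]
    simp
  by_cases hq : ∀ i ∈ U, q i
  · rw [if_pos (this.2 hq), if_pos hq]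
  · rw [if_neg (fun h => hq (this.1 h)), if_neg hq]

/-- Given `n ≥ 1` nonnegative reals `a₁, …, aₙ` and `A` with `a₁ + ⋯ + aₙ ≥ A` and
`aᵢ ≤ A` for all `i`, there is a normal polymatroid `h` on the `n`-element set with
`h({Xᵢ}) = aᵢ` for all `i` and `h(V) = A`. -/
theorem normal_polymatroid_extension (n : ℕ) (hn : 1 ≤ n)
    (a : Fin n → ℝ) (A : ℝ)
    (ha0 : ∀ i, 0 ≤ a i) (haA : ∀ i, a i ≤ A) (hsum : A ≤ ∑ i, a i) :
    ∃ h : Finset (Fin n) → ℝ,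
      IsNormalPolymatroid h ∧ (∀ i, h {i} = a i) ∧ h Finset.univ = A := by
  classical
  have i0 : Fin n := ⟨0, hn⟩
  have hA0 : (0:ℝ) ≤ A := le_trans (ha0 i0) (haA i0)
  rcases eq_or_lt_of_le hA0 with hA | hA
  · -- A = 0, all a i = 0
    have ha : ∀ i, a i = 0 := fun i => le_antisymm (le_of_le_of_eq (haA i) hA.symm) (ha0 i)
    refine ⟨fun _ => 0, ⟨rfl, fun U => ?_⟩, fun i => (ha i).symm, hA⟩
    simp
  · -- A > 0
    set b : ℕ → ℝ := fun j => if h : j < n then a ⟨j, h⟩ else 0 with hbdef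
    have hb0 : ∀ j, 0 ≤ b j := by
      intro j; rw [hbdef]; dsimp only; split
      · exact ha0 _
      · exact le_refl 0
    set S : ℕ → ℝ := fun k => ∑ j ∈ Finset.range k, b j with hSdef
    have hS0 : ∀ k, 0 ≤ S k := fun k => Finset.sum_nonneg fun j _ => hb0 j
    have hSn : S n = ∑ i, a i := by
      rw [hSdef]
      dsimp only
      rw [← Fin.sum_univ_eq_sum_range]
      exact Finset.sum_congr rfl fun i _ => by simp [hbdef, i.isLt]
    have hcov : ∀ m : ℕ, ∀ x : ℝ, 0 ≤ x → x < S m →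
        ∃ j, j < m ∧ S j ≤ x ∧ x < S j + b j := by
      intro m
      induction m with
      | zero => intro x hx0 hx; simp [hSdef] at hx; linarith
      | succ m ih =>
        intro x hx0 hx
        by_cases hxm : x < S m
        · obtain ⟨j, hj, h1, h2⟩ := ih x hx0 hxm
          exact ⟨j, Nat.lt_succ_of_lt hj, h1, h2⟩
        · refine ⟨m, Nat.lt_succ_self m, not_lt.1 hxm, ?_⟩
          have hs : S (m+1) = S m + b m := Finset.sum_range_succ b m
          linarith
    set r : Fin n → ℝ := fun i => if S i.val < A then S i.val else 0 with hrdef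
    have hr0 : ∀ i, 0 ≤ r i := by
      intro i; rw [hrdef]; dsimp only; split
      · exact hS0 _
      · exact le_refl 0
    have hrA : ∀ i, r i < A := by
      intro i; rw [hrdef]; dsimp only; split
      · assumption
      · exact hA
    set C : Fin n → Set ℝ := fun i => Ico (r i) (min (r i + a i) A) ∪ Ico 0 (r i + a i - A)
      with hCdef
    have hCsub : ∀ i, C i ⊆ Ico 0 A := by
      intro i x hx
      rcases hx with hx | hx
      · exact ⟨le_trans (hr0 i) hx.1, lt_of_lt_of_le hx.2 (min_le_right _ _)⟩
      · refine ⟨hx.1, ?_⟩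
        have h1 := hrA i
        have h2 := haA i
        have := hx.2
        linarith
    have hCmeas : ∀ i, MeasurableSet (C i) := fun i =>
      measurableSet_Ico.union measurableSet_Ico
    have hCvol : ∀ i, volume (C i) = ENNReal.ofReal (a i) := by
      intro i
      have hdisj : Disjoint (Ico (r i) (min (r i + a i) A)) (Ico (0:ℝ) (r i + a i - A)) := by
        rw [Set.disjoint_left]
        intro x hx1 hx2
        have h2 := haA i
        have := hx1.1
        have := hx2.2
        linarith
      rw [hCdef]
      dsimp only
      rw [measure_union hdisj measurableSet_Ico, Real.volume_Ico, Real.volume_Ico]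
      rcases le_or_gt (r i + a i) A with h | h
      · rw [min_eq_left h]
        have hz : ENNReal.ofReal (r i + a i - A - 0) = 0 :=
          ENNReal.ofReal_eq_zero.2 (by linarith)
        rw [hz, add_zero]
        congr 1; ring
      · rw [min_eq_right h.le]
        rw [← ENNReal.ofReal_add (by linarith [hrA i]) (by linarith)]
        congr 1; ring
    have hcover : Ico (0:ℝ) A ⊆ ⋃ i, C i := by
      intro x hx
      have hxT : x < S n := by
        rw [hSn]; exact lt_of_lt_of_le hx.2 hsum
      obtain ⟨j, hj, h1, h2⟩ := hcov n x hx.1 hxT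
      refine Set.mem_iUnion.2 ⟨⟨j, hj⟩, ?_⟩
      have hSj : S j < A := lt_of_le_of_lt h1 hx.2
      have hri : r ⟨j, hj⟩ = S j := by rw [hrdef]; exact if_pos hSj
      have hbj : b j = a ⟨j, hj⟩ := by rw [hbdef]; exact dif_pos hj
      left
      refine ⟨by rw [hri]; exact h1, ?_⟩
      rw [hri]
      exact lt_min (by rw [← hbj]; exact h2) hx.2
    refine ⟨fun U => (volume (⋃ i ∈ U, C i)).toReal, ⟨by simp, ?_⟩, ?_, ?_⟩
    · -- normality
      intro U
      rcases U.eq_empty_or_nonempty with rfl | hU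
      · simp
      · have hDmeas : ∀ W : Finset (Fin n), MeasurableSet (⋃ i ∈ W, C i) := fun W =>
          MeasurableSet.biUnion W.countable_toSet fun i _ => hCmeas i
        have hDvol : ∀ W : Finset (Fin n), volume (⋃ i ∈ W, C i) < ⊤ := by
          intro W
          refine lt_of_le_of_lt (measure_mono (Set.iUnion₂_subset fun i _ => hCsub i)) ?_
          rw [Real.volume_Ico]
          exact ENNReal.ofReal_lt_top
        have hint : ∀ W : Finset (Fin n),
            Integrable ((⋃ i ∈ W, C i).indicator (fun _ => (1:ℝ))) volume := by
          intro W
          rw [integrable_indicator_iff (hDmeas W)]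
          exact integrableOn_const (hDvol W).ne
        have hrepr : ∀ W : Finset (Fin n),
            (volume (⋃ i ∈ W, C i)).toReal
              = ∫ x, (⋃ i ∈ W, C i).indicator (fun _ => (1:ℝ)) x := by
          intro W
          exact (integral_indicator_one (hDmeas W)).symm
        have step : ∑ W ∈ U.powerset, (-1:ℝ)^(W.card+1) * (volume (⋃ i ∈ W, C i)).toReal
            = ∫ x, ∑ W ∈ U.powerset,
                (-1:ℝ)^(W.card+1) * (⋃ i ∈ W, C i).indicator (fun _ => (1:ℝ)) x := by
          rw [integral_finset_sum _ (fun W _ => (hint W).const_mul _)]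
          exact Finset.sum_congr rfl fun W _ => by
            rw [hrepr W, MeasureTheory.integral_const_mul]
        show (0:ℝ) ≤ ∑ W ∈ U.powerset,
            (-1:ℝ)^(W.card+1) * (volume (⋃ i ∈ W, C i)).toReal
        rw [step]
        refine integral_nonneg fun x => ?_
        simp only [Pi.zero_apply]
        have hpt : ∀ W ∈ U.powerset,
            (-1:ℝ)^(W.card+1) * (⋃ i ∈ W, C i).indicator (fun _ => (1:ℝ)) x
            = (-1:ℝ)^(W.card+1) * (if ∃ i ∈ W, x ∈ C i then 1 else 0) := by
          intro W _
          congr 1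
          rw [Set.indicator_apply]
          by_cases hx : x ∈ ⋃ i ∈ W, C i
          · have hx' : ∃ i ∈ W, x ∈ C i := by
              obtain ⟨i, hi, hc⟩ := Set.mem_iUnion₂.1 hx
              exact ⟨i, hi, hc⟩
            rw [if_pos hx, if_pos hx']
          · have hx' : ¬ ∃ i ∈ W, x ∈ C i := by
              rintro ⟨i, hi, hc⟩
              exact hx (Set.mem_iUnion₂.2 ⟨i, hi, hc⟩)
            rw [if_neg hx, if_neg hx']
        show (0:ℝ) ≤ ∑ W ∈ U.powerset,
            (-1:ℝ)^(W.card+1) * (⋃ i ∈ W, C i).indicator (fun _ => (1:ℝ)) x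
        rw [Finset.sum_congr rfl hpt, (by convert ie_aux U hU (fun i => x ∈ C i) : ∑ W ∈ U.powerset, (-1:ℝ)^(W.card+1) * (if ∃ i ∈ W, x ∈ C i then 1 else 0) = if ∀ i ∈ U, x ∈ C i then 1 else 0)]
        split
        · exact zero_le_one
        · exact le_refl 0
    · -- singletons
      intro i
      show (volume (⋃ j ∈ ({i} : Finset (Fin n)), C j)).toReal = a i
      have he : (⋃ j ∈ ({i} : Finset (Fin n)), C j) = C i := by simp
      rw [he, hCvol i, ENNReal.toReal_ofReal (ha0 i)]
    · -- univ
      have huniv : (⋃ i ∈ (Finset.univ : Finset (Fin n)), C i) = Ico (0:ℝ) A := by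
        apply Set.Subset.antisymm
        · exact Set.iUnion₂_subset fun i _ => hCsub i
        · intro x hx
          obtain ⟨i, hi⟩ := Set.mem_iUnion.1 (hcover hx)
          exact Set.mem_iUnion₂.2 ⟨i, Finset.mem_univ i, hi⟩
      show (volume (⋃ i ∈ (Finset.univ : Finset (Fin n)), C i)).toReal = A
      rw [huniv, Real.volume_Ico, ENNReal.toReal_ofReal (by linarith)]
      ring
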